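/- Let G be a connected bipartite graph with bipartition (X,Y), |X| = n ≤ |Y| = b, minimum degree δ(G) ≥ r ≥ 1, n ≥ 2k + 2r, and set h = ⌊(n-k-1)/2⌋. If the number of copies of K_{s,s} in G exceeds max{ g(r), g(h) }, where g(a) = C(b,s)C(n-k-1-a,s) + C(a,s)C(n,s) − C(a,s)C(n-k-1-a,s), then G contains a matching with n - k edges. -/

import Mathlib

/-- The number of (unordered, not necessarily induced) copies of the complete bipartite
graph `K_{s,s}` in `G`: half the number of ordered pairs `(S, T)` of disjoint `s`-sets of
vertices with all edges between `S` and `T` present. -/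
noncomputable def kssCount {V : Type*} [Fintype V] (G : SimpleGraph V) (s : ℕ) : ℕ :=
  ({p : Finset V × Finset V | p.1.card = s ∧ p.2.card = s ∧ Disjoint p.1 p.2 ∧
      ∀ x ∈ p.1, ∀ y ∈ p.2, G.Adj x y} : Set (Finset V × Finset V)).ncard / 2

/-- Let `G` be a connected bipartite graph with parts of sizes `n ≤ b`, minimum degree
`≥ r ≥ 1`, and `n ≥ 2k + 2r`; set `h = ⌊(n-k-1)/2⌋`. If the number of copies of `K_{s,s}`
in `G` exceeds `max {g(r), g(h)}`, where
`g(a) = C(b,s)C(n-k-1-a,s) + C(a,s)C(n,s) − C(a,s)C(n-k-1-a,s)`, then `G` contains a matching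
with `n - k` edges. -/
lemma convex_max (f : ℕ → ℤ) (lo hi : ℕ)
    (hmono : ∀ i j, lo ≤ i → i ≤ j → j + 1 ≤ hi → f (i+1) - f i ≤ f (j+1) - f j) :
    ∀ c, lo ≤ c → c ≤ hi → f c ≤ max (f lo) (f hi) := by
  intro c hc1 hc2
  by_cases hneg : ∀ j, lo ≤ j → j + 1 ≤ c → f (j+1) ≤ f j
  · have key : ∀ d, lo ≤ d → d ≤ c → f d ≤ f lo := by
      intro d hd
      induction d, hd using Nat.le_induction with
      | base => intro _; exact le_refl _
      | succ d hd ih => intro hdc; exact (hneg d hd hdc).trans (ih (by omega))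
    exact le_max_of_le_left (key c hc1 le_rfl)
  · push_neg at hneg
    obtain ⟨j, hj1, hj2, hj3⟩ := hneg
    have key : ∀ d, c ≤ d → d ≤ hi → f c ≤ f d := by
      intro d hd
      induction d, hd using Nat.le_induction with
      | base => intro _; exact le_refl _
      | succ d hd ih =>
        intro hdhi
        have h1 : f (j+1) - f j ≤ f (d+1) - f d := hmono j d hj1 (by omega) hdhi
        have := ih (by omega)
        omega
    exact le_max_of_le_right (key hi hc2 le_rfl)

lemma key_arith (b n m r c s' : ℕ) (hmn : m ≤ n) (hnb : n ≤ b)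
    (hrc : r ≤ c) (hcm : c + r ≤ m) :
    (fun a : ℕ => (b.choose (s'+1) : ℤ) * ((m-a).choose (s'+1)) + (a.choose (s'+1)) * (n.choose (s'+1))
      - (a.choose (s'+1)) * ((m-a).choose (s'+1))) c
    ≤ max ((fun a : ℕ => (b.choose (s'+1) : ℤ) * ((m-a).choose (s'+1)) + (a.choose (s'+1)) * (n.choose (s'+1))
      - (a.choose (s'+1)) * ((m-a).choose (s'+1))) r)
      ((fun a : ℕ => (b.choose (s'+1) : ℤ) * ((m-a).choose (s'+1)) + (a.choose (s'+1)) * (n.choose (s'+1))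
      - (a.choose (s'+1)) * ((m-a).choose (s'+1))) (m/2)) := by
  set s := s' + 1 with hs
  set B : ℤ := (b.choose s : ℤ) with hB
  set N : ℤ := (n.choose s : ℤ) with hN
  set Gf : ℕ → ℤ := fun a => B * ((m-a).choose s) + (a.choose s) * N - (a.choose s) * ((m-a).choose s) with hGf
  show Gf c ≤ max (Gf r) (Gf (m/2))
  have hBN : N ≤ B := by rw [hN, hB]; exact_mod_cast Nat.choose_le_choose s hnb
  -- reduce to c2 = min c (m - c) ≤ m/2
  set c2 := min c (m - c) with hc2
  have hc2r : r ≤ c2 := by omega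
  have hc2h : c2 ≤ m / 2 := by omega
  have step1 : Gf c ≤ Gf c2 := by
    rcases le_or_gt c (m - c) with hle | hlt
    · simp [hc2, min_eq_left hle]
    · have hcm' : c ≤ m := by omega
      have hmc : m - (m - c) = c := by omega
      have hxy : ((m - c).choose s : ℤ) ≤ (c.choose s : ℤ) := by
        exact_mod_cast Nat.choose_le_choose s (by omega)
      have : Gf c - Gf (m - c) = (B - N) * (((m-c).choose s : ℤ) - (c.choose s : ℤ)) := by
        simp only [hGf, hmc]; ring
      have hle0 : (B - N) * (((m-c).choose s : ℤ) - (c.choose s : ℤ)) ≤ 0 :=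
        mul_nonpos_of_nonneg_of_nonpos (by omega) (by omega)
      rw [hc2, min_eq_right (by omega)]
      omega
  refine step1.trans (convex_max Gf r (m/2) ?_ c2 hc2r hc2h)
  intro i j hri hij hjh
  have hi1 : i + 1 ≤ m := by omega
  have hj1 : j + 1 ≤ m := by omega
  have hdelta : ∀ a : ℕ, a + 1 ≤ m →
      Gf (a+1) - Gf a = (a.choose s' : ℤ) * (N - ((m-a-1).choose s))
        - ((m-a-1).choose s') * (B - (a.choose s)) := by
    intro a ham
    have e1 : (a+1).choose s = a.choose s' + a.choose s := by
      rw [hs, Nat.choose_succ_succ]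
    have e2 : m - a = (m - a - 1) + 1 := by omega
    have e3 : (m - a).choose s = (m-a-1).choose s' + (m-a-1).choose s := by
      rw [e2, hs, Nat.choose_succ_succ]; simp
    have e4 : m - (a+1) = m - a - 1 := by omega
    simp only [hGf, e4, e1, e3]
    push_cast
    ring
  rw [hdelta i hi1, hdelta j hj1]
  have m1 : (i.choose s' : ℤ) * (N - ((m-i-1).choose s)) ≤ (j.choose s' : ℤ) * (N - ((m-j-1).choose s)) := by
    apply mul_le_mul
    · exact_mod_cast Nat.choose_le_choose s' hij
    · have : ((m-j-1).choose s : ℤ) ≤ ((m-i-1).choose s : ℤ) := by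
        exact_mod_cast Nat.choose_le_choose s (by omega)
      omega
    · have : ((m-i-1).choose s : ℤ) ≤ N := by
        rw [hN]; exact_mod_cast Nat.choose_le_choose s (by omega)
      omega
    · positivity
  have m2 : ((m-j-1).choose s' : ℤ) * (B - (j.choose s)) ≤ ((m-i-1).choose s' : ℤ) * (B - (i.choose s)) := by
    apply mul_le_mul
    · exact_mod_cast Nat.choose_le_choose s' (by omega)
    · have : (i.choose s : ℤ) ≤ (j.choose s : ℤ) := by
        exact_mod_cast Nat.choose_le_choose s hij
      omega
    · have : (j.choose s : ℤ) ≤ B := by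
        rw [hB]; exact_mod_cast Nat.choose_le_choose s (by omega)
      omega
    · positivity
  omega

lemma count_bound (b n m r c a s' : ℕ) (hmn : m ≤ n) (hnb : n ≤ b)
    (hrc : r ≤ c) (hra : r ≤ a) (hac : a + c ≤ m) :
    (a.choose (s'+1) : ℤ) * (b.choose (s'+1)) + (n.choose (s'+1) : ℤ) * (c.choose (s'+1))
      - (a.choose (s'+1) : ℤ) * (c.choose (s'+1))
    ≤ max ((b.choose (s'+1) : ℤ) * ((m-r).choose (s'+1)) + (r.choose (s'+1) : ℤ) * (n.choose (s'+1))
            - (r.choose (s'+1) : ℤ) * ((m-r).choose (s'+1)))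
          ((b.choose (s'+1) : ℤ) * ((m-m/2).choose (s'+1)) + ((m/2).choose (s'+1) : ℤ) * (n.choose (s'+1))
            - ((m/2).choose (s'+1) : ℤ) * ((m-m/2).choose (s'+1))) := by
  have h1 : (a.choose (s'+1) : ℤ) ≤ ((m - c).choose (s'+1) : ℤ) := by
    exact_mod_cast Nat.choose_le_choose _ (by omega)
  have h2 : (c.choose (s'+1) : ℤ) ≤ (b.choose (s'+1) : ℤ) := by
    exact_mod_cast Nat.choose_le_choose _ (by omega)
  have hstep : (a.choose (s'+1) : ℤ) * (b.choose (s'+1)) + (n.choose (s'+1) : ℤ) * (c.choose (s'+1))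
      - (a.choose (s'+1) : ℤ) * (c.choose (s'+1))
      ≤ (b.choose (s'+1) : ℤ) * ((m-c).choose (s'+1)) + (c.choose (s'+1) : ℤ) * (n.choose (s'+1))
        - (c.choose (s'+1) : ℤ) * ((m-c).choose (s'+1)) := by
    nlinarith [mul_nonneg (sub_nonneg.mpr h1) (sub_nonneg.mpr h2)]
  have h3 := key_arith b n m r c s' hmn hnb hrc (by omega)
  simp only at h3
  exact hstep.trans h3

lemma matching_of_pairs {V : Type*} [Fintype V] [DecidableEq V] (G : SimpleGraph V)
    (X Y : Finset V) (hdisj : Disjoint X Y) (P : Finset V) (hPX : P ⊆ X) (φ : V → V)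
    (hadj : ∀ x ∈ P, G.Adj x (φ x)) (hφY : ∀ x ∈ P, φ x ∈ Y)
    (hinj : Set.InjOn φ ↑P) :
    ∃ M : G.Subgraph, M.IsMatching ∧ M.edgeSet.ncard = P.card := by
  classical
  have hPY : ∀ x ∈ P, x ∉ Y := fun x hx hy =>
    (Finset.disjoint_left.mp hdisj (hPX hx)) hy
  have hφX : ∀ x ∈ P, φ x ∉ P := fun x hx hmem =>
    (Finset.disjoint_left.mp hdisj (hPX hmem)) (hφY x hx)
  refine ⟨⟨↑P ∪ φ '' ↑P,
    fun u v => (u ∈ P ∧ v = φ u) ∨ (v ∈ P ∧ u = φ v), ?_, ?_, ?_⟩, ?_, ?_⟩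
  · rintro u v (⟨h, rfl⟩ | ⟨h, rfl⟩)
    · exact hadj u h
    · exact (hadj v h).symm
  · rintro u v (⟨h, rfl⟩ | ⟨h, rfl⟩)
    · exact Or.inl (by simpa using h)
    · exact Or.inr ⟨v, by simpa using h, rfl⟩
  · refine ⟨?_⟩; rintro u v (⟨h, rfl⟩ | ⟨h, rfl⟩)
    · exact Or.inr ⟨h, rfl⟩
    · exact Or.inl ⟨h, rfl⟩
  · rintro v (hv | ⟨x, hx, rfl⟩)
    · simp only [Set.mem_setOf_eq] at hv ⊢
      refine ⟨φ v, Or.inl ⟨by simpa using hv, rfl⟩, ?_⟩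
      rintro w (⟨_, rfl⟩ | ⟨hw, hwe⟩)
      · rfl
      · exact absurd (hwe ▸ hφY w hw) (hPY v (by simpa using hv))
    · simp only [Finset.mem_coe] at hx
      refine ⟨x, Or.inr ⟨hx, rfl⟩, ?_⟩
      rintro w (⟨hw, hwe⟩ | ⟨hw, hwe⟩)
      · exact absurd hw (hφX x hx)
      · exact hinj hw hx hwe.symm
  · have : (⟨↑P ∪ φ '' ↑P,
        fun u v => (u ∈ P ∧ v = φ u) ∨ (v ∈ P ∧ u = φ v), by
          rintro u v (⟨h, rfl⟩ | ⟨h, rfl⟩); exacts [hadj u h, (hadj v h).symm], by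
          rintro u v (⟨h, rfl⟩ | ⟨h, rfl⟩)
          · exact Or.inl (by simpa using h)
          · exact Or.inr ⟨v, by simpa using h, rfl⟩, by
          refine ⟨?_⟩; rintro u v (⟨h, rfl⟩ | ⟨h, rfl⟩)
          · exact Or.inr ⟨h, rfl⟩
          · exact Or.inl ⟨h, rfl⟩⟩ : G.Subgraph).edgeSet
        = (fun x => s(x, φ x)) '' ↑P := by
      ext e
      induction e with
      | _ u v =>
        simp only [SimpleGraph.Subgraph.mem_edgeSet, Set.mem_image, Finset.mem_coe]
        constructor
        · rintro (⟨h, rfl⟩ | ⟨h, rfl⟩)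
          · exact ⟨u, h, rfl⟩
          · exact ⟨v, h, Sym2.eq_swap⟩
        · rintro ⟨x, hx, hxe⟩
          rw [Sym2.eq_iff] at hxe
          rcases hxe with ⟨rfl, rfl⟩ | ⟨rfl, rfl⟩
          · exact Or.inl ⟨hx, rfl⟩
          · exact Or.inr ⟨hx, rfl⟩
    rw [this, Set.ncard_image_of_injOn, Set.ncard_coe_finset]
    intro x hx y hy hxy
    simp only [Finset.mem_coe] at hx hy
    rw [Sym2.eq_iff] at hxy
    rcases hxy with ⟨rfl, _⟩ | ⟨h1, h2⟩
    · rfl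
    · subst h1
      exact absurd hx (hφX y hy)





theorem stmt_15 {V : Type*} [Fintype V] [DecidableEq V]
    (G : SimpleGraph V) [DecidableRel G.Adj] (n b k r s : ℕ)
    (X Y : Finset V) (hdisj : Disjoint X Y) (hunion : X ∪ Y = Finset.univ)
    (hX : X.card = n) (hY : Y.card = b) (hbn : n ≤ b)
    (hbip : ∀ x y : V, G.Adj x y → (x ∈ X ∧ y ∈ Y) ∨ (x ∈ Y ∧ y ∈ X))
    (hconn : G.Connected)
    (hr : 1 ≤ r) (hδ : ∀ v : V, r ≤ G.degree v) (hn : 2 * k + 2 * r ≤ n)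
    (g : ℕ → ℕ)
    (hg : ∀ a : ℕ, g a = b.choose s * (n - k - 1 - a).choose s + a.choose s * n.choose s
          - a.choose s * (n - k - 1 - a).choose s)
    (hcount : max (g r) (g ((n - k - 1) / 2)) < kssCount G s) :
    ∃ M : G.Subgraph, M.IsMatching ∧ M.edgeSet.ncard = n - k := by
  classical
  -- the case s = 0 is vacuous
  rcases Nat.eq_zero_or_pos s with rfl | hs
  · exfalso
    have h0 : kssCount G 0 = 0 := by
      unfold kssCount
      have : ({p : Finset V × Finset V | p.1.card = 0 ∧ p.2.card = 0 ∧ Disjoint p.1 p.2 ∧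
          ∀ x ∈ p.1, ∀ y ∈ p.2, G.Adj x y} : Set (Finset V × Finset V))
          = {((∅ : Finset V), (∅ : Finset V))} := by
        ext p
        simp only [Set.mem_setOf_eq, Set.mem_singleton_iff, Finset.card_eq_zero, Prod.ext_iff]
        constructor
        · rintro ⟨h1, h2, -, -⟩; exact ⟨h1, h2⟩
        · rintro ⟨h1, h2⟩; simp [h1, h2]
      rw [this, Set.ncard_singleton]
    omega
  set m := n - k - 1 with hm
  have hkn : k + 1 ≤ n := by omega
  have hmn : m ≤ n := by omega
  -- the Hall function with k dummy vertices
  set t : ↥X → Finset (V ⊕ Fin k) := fun x =>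
    ((G.neighborFinset ↑x).map ⟨Sum.inl, Sum.inl_injective⟩) ∪
      ((Finset.univ : Finset (Fin k)).map ⟨Sum.inr, Sum.inr_injective⟩) with ht
  by_cases hall : ∀ S : Finset ↥X, S.card ≤ (S.biUnion t).card
  · -- Hall condition holds : construct the matching
    obtain ⟨f, hfinj, hft⟩ := (Finset.all_card_le_biUnion_card_iff_exists_injective t).mp hall
    set Q : Finset ↥X := Finset.univ.filter (fun x => (f x).isLeft) with hQdef
    have hRk : ((Finset.univ : Finset ↥X) \ Q).card ≤ k := by
      set R := (Finset.univ : Finset ↥X) \ Q with hRdef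
      have h1 : R.card = (R.image f).card := (Finset.card_image_of_injective R hfinj).symm
      have h2 : R.image f ⊆ (Finset.univ : Finset (Fin k)).image Sum.inr := by
        intro y hy
        obtain ⟨x, hx, rfl⟩ := Finset.mem_image.mp hy
        rw [hRdef, Finset.mem_sdiff, hQdef, Finset.mem_filter] at hx
        rcases hz : f x with z | z
        · exact absurd ⟨Finset.mem_univ x, by rw [hz]; rfl⟩ hx.2
        · exact Finset.mem_image.mpr ⟨z, Finset.mem_univ z, rfl⟩
      calc R.card = (R.image f).card := h1
        _ ≤ ((Finset.univ : Finset (Fin k)).image Sum.inr).card := Finset.card_le_card h2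
        _ ≤ (Finset.univ : Finset (Fin k)).card := Finset.card_image_le
        _ = k := by simp
    have hQcard : n - k ≤ Q.card := by
      have hsd : ((Finset.univ : Finset ↥X) \ Q).card
          = (Finset.univ : Finset ↥X).card - Q.card :=
        Finset.card_sdiff_of_subset (Finset.subset_univ Q)
      have hcu : (Finset.univ : Finset ↥X).card = n := by
        rw [Finset.card_univ, Fintype.card_coe, hX]
      have hQle : Q.card ≤ n := hcu ▸ Finset.card_le_card (Finset.subset_univ Q)
      omega
    obtain ⟨P0, hP0Q, hP0card⟩ := Finset.exists_subset_card_eq (s := Q) (n := n - k) hQcard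
    -- the partner function
    have hkey : ∀ x ∈ P0, ∃ y, f x = Sum.inl y ∧ y ∈ G.neighborFinset ↑x := by
      intro x hx
      have hxQ := hP0Q hx
      rw [hQdef, Finset.mem_filter] at hxQ
      rcases hz : f x with y | z
      · refine ⟨y, rfl, ?_⟩
        have := hft x
        rw [ht] at this
        simp only [Finset.mem_union, Finset.mem_map, Function.Embedding.coeFn_mk, hz] at this
        rcases this with ⟨w, hw, hwe⟩ | ⟨w, -, hwe⟩
        · obtain rfl : w = y := by simpa using hwe
          exact hw
        · simp at hwe
      · exfalso; rw [hz] at hxQ; simpa using hxQ.2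
    set ψ : ↥X → V := fun x => Sum.elim id (fun _ => (x : V)) (f x) with hψ
    set P : Finset V := P0.map ⟨Subtype.val, Subtype.val_injective⟩ with hP
    set φ : V → V := fun v => if hv : v ∈ X then ψ ⟨v, hv⟩ else v with hφ
    have hPX : P ⊆ X := by
      intro v hv
      rw [hP, Finset.mem_map] at hv
      obtain ⟨x, -, rfl⟩ := hv
      exact x.2
    have hmemP : ∀ v ∈ P, ∃ x : ↥X, x ∈ P0 ∧ (x : V) = v := by
      intro v hv
      rw [hP, Finset.mem_map] at hv
      obtain ⟨x, hx, rfl⟩ := hv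
      exact ⟨x, hx, rfl⟩
    have hφval : ∀ x : ↥X, x ∈ P0 → φ ↑x = ψ x ∧ G.Adj ↑x (φ ↑x) ∧ Sum.inl (φ ↑x) = f x := by
      intro x hx
      obtain ⟨y, hy1, hy2⟩ := hkey x hx
      have h1 : φ ↑x = ψ x := by
        rw [hφ]
        simp only [x.2, dif_pos]
      have h2 : ψ x = y := by rw [hψ]; simp [hy1]
      refine ⟨h1, ?_, ?_⟩
      · rw [h1, h2]; exact (G.mem_neighborFinset _ _).mp hy2
      · rw [h1, h2, hy1]
    have hadj : ∀ v ∈ P, G.Adj v (φ v) := by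
      intro v hv
      obtain ⟨x, hx, rfl⟩ := hmemP v hv
      exact (hφval x hx).2.1
    have hφY : ∀ v ∈ P, φ v ∈ Y := by
      intro v hv
      obtain ⟨x, hx, rfl⟩ := hmemP v hv
      rcases hbip _ _ (hφval x hx).2.1 with ⟨-, h⟩ | ⟨h, -⟩
      · exact h
      · exact absurd x.2 (Finset.disjoint_right.mp hdisj h)
    have hinj : Set.InjOn φ ↑P := by
      intro u hu v hv huv
      obtain ⟨x, hx, rfl⟩ := hmemP u (by simpa using hu)
      obtain ⟨x', hx', rfl⟩ := hmemP v (by simpa using hv)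
      have h1 := (hφval x hx).2.2
      have h2 := (hφval x' hx').2.2
      have : f x = f x' := by rw [← h1, ← h2, huv]
      exact congrArg Subtype.val (hfinj this)
    obtain ⟨M, hM1, hM2⟩ := matching_of_pairs G X Y hdisj P hPX φ hadj hφY hinj
    refine ⟨M, hM1, ?_⟩
    rw [hM2, hP, Finset.card_map, hP0card]
  · -- Hall condition fails : contradict the count hypothesis
    exfalso
    obtain ⟨s', rfl⟩ : ∃ s', s = s' + 1 := ⟨s - 1, by omega⟩
    push_neg at hall
    obtain ⟨S, hS⟩ := hall
    set s : ℕ := s' + 1 with hsdef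
    set S' : Finset V := S.map ⟨Subtype.val, Subtype.val_injective⟩ with hS'def
    set NS : Finset V := S.biUnion (fun x => G.neighborFinset ↑x) with hNSdef
    have hS'X : S' ⊆ X := by
      intro v hv
      rw [hS'def, Finset.mem_map] at hv
      obtain ⟨x, -, rfl⟩ := hv
      exact x.2
    have hScard : S'.card = S.card := Finset.card_map _
    have hSne : S.Nonempty := by
      rcases S.eq_empty_or_nonempty with rfl | h
      · simp at hS
      · exact h
    have hbi : S.biUnion t = (NS.map ⟨Sum.inl, Sum.inl_injective⟩) ∪
        ((Finset.univ : Finset (Fin k)).map ⟨Sum.inr, Sum.inr_injective⟩) := by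
      ext a
      simp only [ht, Finset.mem_biUnion, Finset.mem_union, Finset.mem_map,
        Function.Embedding.coeFn_mk, hNSdef]
      constructor
      · rintro ⟨x, hx, (⟨w, hw, rfl⟩ | ⟨w, hw, rfl⟩)⟩
        · exact Or.inl ⟨w, ⟨x, hx, hw⟩, rfl⟩
        · exact Or.inr ⟨w, hw, rfl⟩
      · rintro (⟨w, ⟨x, hx, hwx⟩, rfl⟩ | ⟨w, hw, rfl⟩)
        · exact ⟨x, hx, Or.inl ⟨w, hwx, rfl⟩⟩
        · obtain ⟨x, hx⟩ := hSne
          exact ⟨x, hx, Or.inr ⟨w, hw, rfl⟩⟩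
    have hbicard : (S.biUnion t).card = NS.card + k := by
      rw [hbi, Finset.card_union_of_disjoint, Finset.card_map, Finset.card_map]
      · simp
      · rw [Finset.disjoint_left]
        rintro a ha hb
        obtain ⟨w, -, rfl⟩ := Finset.mem_map.mp ha
        obtain ⟨w', -, hw'⟩ := Finset.mem_map.mp hb
        exact absurd hw' (by simp)
    have hSk : NS.card + k + 1 ≤ S'.card := by rw [hScard]; omega
    have hS'n : S'.card ≤ n := hX ▸ Finset.card_le_card hS'X
    have hNSY : NS ⊆ Y := by
      intro y hy
      obtain ⟨x, hx, hyx⟩ := Finset.mem_biUnion.mp hy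
      have hadj : G.Adj ↑x y := (G.mem_neighborFinset _ _).mp hyx
      rcases hbip _ _ hadj with ⟨-, h⟩ | ⟨h, -⟩
      · exact h
      · exact absurd h (Finset.disjoint_left.mp hdisj x.2)
    have ha'eq : (X \ S').card = n - S'.card := by rw [Finset.card_sdiff_of_subset hS'X, hX]
    have hac : (X \ S').card + NS.card ≤ m := by omega
    have hcr : r ≤ NS.card := by
      obtain ⟨x, hx⟩ := hSne
      calc r ≤ G.degree ↑x := hδ _
        _ = (G.neighborFinset ↑x).card := (SimpleGraph.card_neighborFinset_eq_degree _ _).symm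
        _ ≤ NS.card := Finset.card_le_card (by rw [hNSdef]; exact Finset.subset_biUnion_of_mem (fun x : ↥X => G.neighborFinset ↑x) hx)
    have har : r ≤ (X \ S').card := by
      have hYne : ∃ y ∈ Y, y ∉ NS := by
        by_contra hcon
        push_neg at hcon
        have : Y.card ≤ NS.card := Finset.card_le_card hcon
        omega
      obtain ⟨y, hyY, hyNS⟩ := hYne
      have hnb : G.neighborFinset y ⊆ X \ S' := by
        intro z hz
        have hadj : G.Adj y z := (G.mem_neighborFinset _ _).mp hz
        have hzX : z ∈ X := by
          rcases hbip _ _ hadj with ⟨h, -⟩ | ⟨-, h⟩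
          · exact absurd h (Finset.disjoint_right.mp hdisj hyY)
          · exact h
        have hzS : z ∉ S' := by
          intro hzS
          rw [hS'def, Finset.mem_map] at hzS
          obtain ⟨x, hxS, hxz⟩ := hzS
          apply hyNS
          rw [hNSdef]
          exact Finset.mem_biUnion.mpr ⟨x, hxS,
            (G.mem_neighborFinset _ _).mpr (by rw [show (x : V) = z from hxz]; exact hadj.symm)⟩
        exact Finset.mem_sdiff.mpr ⟨hzX, hzS⟩
      calc r ≤ G.degree y := hδ _
        _ = (G.neighborFinset y).card := (SimpleGraph.card_neighborFinset_eq_degree _ _).symm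
        _ ≤ (X \ S').card := Finset.card_le_card hnb
    -- counting K_{s,s}'s
    set Fall : Finset (Finset V × Finset V) := Finset.univ.filter
      (fun p => p.1.card = s ∧ p.2.card = s ∧ Disjoint p.1 p.2 ∧
        ∀ x ∈ p.1, ∀ y ∈ p.2, G.Adj x y) with hFall
    have hkssF : kssCount G s = Fall.card / 2 := by
      unfold kssCount
      congr 1
      rw [← Set.ncard_coe_finset Fall]
      congr 1
      ext p
      simp [hFall]
    have hdich : ∀ p ∈ Fall, (p.1 ⊆ X ∧ p.2 ⊆ Y) ∨ (p.1 ⊆ Y ∧ p.2 ⊆ X) := by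
      intro p hp
      rw [hFall, Finset.mem_filter] at hp
      obtain ⟨-, hc1, hc2, -, hadjp⟩ := hp
      obtain ⟨x0, hx0⟩ : p.1.Nonempty := by rw [← Finset.card_pos, hc1]; omega
      obtain ⟨y0, hy0⟩ : p.2.Nonempty := by rw [← Finset.card_pos, hc2]; omega
      rcases hbip _ _ (hadjp x0 hx0 y0 hy0) with ⟨hxX, hyY⟩ | ⟨hxY, hyX⟩
      · refine Or.inl ⟨fun x hx => ?_, fun y hy => ?_⟩
        · rcases hbip _ _ (hadjp x hx y0 hy0) with ⟨h, -⟩ | ⟨-, h⟩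
          · exact h
          · exact absurd h (Finset.disjoint_right.mp hdisj hyY)
        · rcases hbip _ _ (hadjp x0 hx0 y hy) with ⟨-, h⟩ | ⟨h, -⟩
          · exact h
          · exact absurd h (Finset.disjoint_left.mp hdisj hxX)
      · refine Or.inr ⟨fun x hx => ?_, fun y hy => ?_⟩
        · rcases hbip _ _ (hadjp x hx y0 hy0) with ⟨-, h⟩ | ⟨h, -⟩
          · exact absurd h (Finset.disjoint_left.mp hdisj hyX)
          · exact h
        · rcases hbip _ _ (hadjp x0 hx0 y hy) with ⟨h, -⟩ | ⟨-, h⟩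
          · exact absurd h (Finset.disjoint_right.mp hdisj hxY)
          · exact h
    have hswapmem : ∀ p ∈ Fall, (p.2, p.1) ∈ Fall := by
      intro p hp
      rw [hFall, Finset.mem_filter] at hp ⊢
      obtain ⟨-, h1, h2, h3, h4⟩ := hp
      exact ⟨Finset.mem_univ _, h2, h1, h3.symm, fun x hx y hy => (h4 y hy x hx).symm⟩
    set F1 : Finset (Finset V × Finset V) := Fall.filter (fun p => p.1 ⊆ X) with hF1
    have hswap : Fall.filter (fun p => ¬ p.1 ⊆ X) = F1.image (fun p => (p.2, p.1)) := by
      ext p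
      simp only [Finset.mem_filter, Finset.mem_image, hF1]
      constructor
      · rintro ⟨hp, hnX⟩
        rcases hdich p hp with ⟨h1, -⟩ | ⟨-, h2⟩
        · exact absurd h1 hnX
        · exact ⟨(p.2, p.1), ⟨hswapmem p hp, h2⟩, rfl⟩
      · rintro ⟨q, ⟨hq, hqX⟩, rfl⟩
        refine ⟨hswapmem q hq, ?_⟩
        have hq' := hq
        rw [hFall, Finset.mem_filter] at hq'
        obtain ⟨-, hc1, -, -, -⟩ := hq'
        obtain ⟨x0, hx0⟩ : q.1.Nonempty := by rw [← Finset.card_pos, hc1]; omega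
        rcases hdich q hq with ⟨-, h2Y⟩ | ⟨h1Y, -⟩
        · intro hsub
          obtain ⟨y0, hy0⟩ : q.2.Nonempty := by
            rw [hFall, Finset.mem_filter] at hq
            rw [← Finset.card_pos, hq.2.2.1]; omega
          exact absurd (h2Y hy0) (Finset.disjoint_left.mp hdisj (hsub hy0))
        · exact absurd (h1Y hx0) (Finset.disjoint_left.mp hdisj (hqX hx0))
    have hFallcard : Fall.card = 2 * F1.card := by
      have hsplit := Finset.card_filter_add_card_filter_not
        (s := Fall) (p := fun p : Finset V × Finset V => p.1 ⊆ X)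
      have himg : (F1.image (fun p : Finset V × Finset V => (p.2, p.1))).card = F1.card := by
        apply Finset.card_image_of_injective
        intro p q h
        simp only [Prod.ext_iff] at h ⊢
        exact ⟨h.2, h.1⟩
      rw [hswap, himg] at hsplit
      rw [hF1] at hsplit ⊢
      omega
    have hkss1 : kssCount G s = F1.card := by rw [hkssF, hFallcard]; omega
    set U1 : Finset (Finset V × Finset V) :=
      Finset.powersetCard s (X \ S') ×ˢ Finset.powersetCard s Y with hU1
    set U2 : Finset (Finset V × Finset V) :=
      Finset.powersetCard s X ×ˢ Finset.powersetCard s NS with hU2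
    have hsubU : F1 ⊆ U1 ∪ U2 := by
      intro p hp
      rw [hF1, Finset.mem_filter] at hp
      obtain ⟨hpFall, hp1X⟩ := hp
      have hp' := hpFall
      rw [hFall, Finset.mem_filter] at hp'
      obtain ⟨-, hc1, hc2, -, hadjp⟩ := hp'
      have hp2Y : p.2 ⊆ Y := by
        rcases hdich p hpFall with ⟨-, h⟩ | ⟨h1, -⟩
        · exact h
        · exfalso
          obtain ⟨x0, hx0⟩ : p.1.Nonempty := by rw [← Finset.card_pos, hc1]; omega
          exact absurd (h1 hx0) (Finset.disjoint_left.mp hdisj (hp1X hx0))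
      by_cases hcase : p.1 ⊆ X \ S'
      · exact Finset.mem_union_left _ (Finset.mem_product.mpr
          ⟨Finset.mem_powersetCard.mpr ⟨hcase, hc1⟩, Finset.mem_powersetCard.mpr ⟨hp2Y, hc2⟩⟩)
      · obtain ⟨v, hv, hvn⟩ := Finset.not_subset.mp hcase
        have hvS : v ∈ S' := by
          by_contra hvS
          exact hvn (Finset.mem_sdiff.mpr ⟨hp1X hv, hvS⟩)
        rw [hS'def, Finset.mem_map] at hvS
        obtain ⟨x, hxS, hxv⟩ := hvS
        have hp2NS : p.2 ⊆ NS := by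
          intro y hy
          rw [hNSdef]
          exact Finset.mem_biUnion.mpr ⟨x, hxS,
            (G.mem_neighborFinset _ _).mpr (by rw [show (x : V) = v from hxv]; exact hadjp v hv y hy)⟩
        exact Finset.mem_union_right _ (Finset.mem_product.mpr
          ⟨Finset.mem_powersetCard.mpr ⟨hp1X, hc1⟩, Finset.mem_powersetCard.mpr ⟨hp2NS, hc2⟩⟩)
    have hU12 : U1 ∩ U2 = Finset.powersetCard s (X \ S') ×ˢ Finset.powersetCard s NS := by
      ext p
      simp only [hU1, hU2, Finset.mem_inter, Finset.mem_product, Finset.mem_powersetCard]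
      constructor
      · rintro ⟨⟨⟨ha1, ha2⟩, -⟩, -, hd1, hd2⟩
        exact ⟨⟨ha1, ha2⟩, hd1, hd2⟩
      · rintro ⟨⟨ha1, ha2⟩, hd1, hd2⟩
        exact ⟨⟨⟨ha1, ha2⟩, hd1.trans hNSY, hd2⟩,
          ⟨ha1.trans Finset.sdiff_subset, ha2⟩, hd1, hd2⟩
    have hcU1 : U1.card = (X \ S').card.choose s * b.choose s := by
      rw [hU1, Finset.card_product, Finset.card_powersetCard, Finset.card_powersetCard, hY]
    have hcU2 : U2.card = n.choose s * NS.card.choose s := by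
      rw [hU2, Finset.card_product, Finset.card_powersetCard, Finset.card_powersetCard, hX]
    have hcU12 : (U1 ∩ U2).card = (X \ S').card.choose s * NS.card.choose s := by
      rw [hU12, Finset.card_product, Finset.card_powersetCard, Finset.card_powersetCard]
    have hUU := Finset.card_union_add_card_inter U1 U2
    -- pass to the integers
    set a' := (X \ S').card
    set c' := NS.card
    have hchain1 : (F1.card : ℤ) ≤ ((U1 ∪ U2).card : ℤ) :=
      Int.ofNat_le.mpr (Finset.card_le_card hsubU)
    have hchain2 : ((U1 ∪ U2).card : ℤ)
        = (a'.choose s : ℤ) * (b.choose s) + (n.choose s : ℤ) * (c'.choose s)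
          - (a'.choose s : ℤ) * (c'.choose s) := by
      have h := hUU
      rw [hcU1, hcU2, hcU12] at h
      have h2 := congrArg (Nat.cast : ℕ → ℤ) h
      push_cast at h2
      linarith
    have hbound := count_bound b n m r c' a' s' hmn hbn hcr har (by omega)
    have hgz : ∀ a : ℕ, (g a : ℤ)
        = (b.choose s : ℤ) * ((m - a).choose s) + (a.choose s : ℤ) * (n.choose s)
          - (a.choose s : ℤ) * ((m - a).choose s) := by
      intro a
      rw [hg a]
      have hle : a.choose s * (m - a).choose s
          ≤ b.choose s * (m - a).choose s + a.choose s * n.choose s := by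
        have : a.choose s * (m - a).choose s ≤ a.choose s * n.choose s :=
          Nat.mul_le_mul_left _ (Nat.choose_le_choose _ (by omega))
        omega
      rw [Nat.cast_sub hle]
      push_cast
      ring
    have hfin : (F1.card : ℤ) ≤ max ((g r : ℕ) : ℤ) ((g (m / 2) : ℕ) : ℤ) := by
      rw [hgz r, hgz (m / 2)]
      exact (hchain1.trans_eq hchain2).trans hbound
    have hfin' : F1.card ≤ max (g r) (g (m / 2)) := by exact_mod_cast hfin
    rw [hkss1] at hcount
    omega
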